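/- Let n ≥ 0, let X and A_1, …, A_n be finite sets, and for each 1 ≤ i ≤ n let f_i : X → A_i be a function. Then the number of tuples (x_0, x_1, …, x_n) ∈ X^(n+1) satisfying f_i(x_{i−1}) = f_i(x_i) for all 1 ≤ i ≤ n is at least 2^(−n) · (#X)^(n+1) / (∏_{i=1}^n #A_i), i.e. 2^n · (#{such tuples}) · ∏_{i=1}^n #A_i ≥ (#X)^(n+1). -/

import Mathlib

open Finset
set_option linter.unusedSectionVars false
set_option maxHeartbeats 1000000

namespace KTaux

universe u v
variable {X : Type u} [Fintype X] [DecidableEq X]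

/-- fiber count of `x` under `h` -/
def fc {A : Type*} [DecidableEq A] (h : X → A) (x : X) : ℕ :=
  (Finset.univ.filter fun y => h y = h x).card

lemma fc_pos {A : Type*} [DecidableEq A] (h : X → A) (x : X) : 0 < fc h x :=
  Finset.card_pos.2 ⟨x, by simp [fc]⟩

lemma fc_ne_zero {A : Type*} [DecidableEq A] (h : X → A) (x : X) : ((fc h x : ℝ)) ≠ 0 := by
  exact_mod_cast (fc_pos h x).ne'

lemma fc_congr {A : Type*} [DecidableEq A] (h : X → A) {x y : X} (e : h y = h x) :
    fc h y = fc h x := by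
  unfold fc
  congr 1
  apply Finset.filter_congr
  intro z _
  simp [e]

lemma sum_fiber_inv {A : Type*} [DecidableEq A] (h : X → A) (x : X) :
    ∑ y ∈ Finset.univ.filter (fun y => h y = h x), ((fc h y : ℝ))⁻¹ = 1 := by
  have h1 : ∀ y ∈ Finset.univ.filter (fun y => h y = h x),
      ((fc h y : ℝ))⁻¹ = ((fc h x : ℝ))⁻¹ := by
    intro y hy
    rw [Finset.mem_filter] at hy
    rw [fc_congr h hy.2]
  rw [Finset.sum_congr rfl h1, Finset.sum_const]
  have : (Finset.univ.filter fun y => h y = h x).card = fc h x := rfl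
  rw [this, nsmul_eq_mul, mul_inv_cancel₀ (fc_ne_zero h x)]

lemma sum_transfer {A : Type*} [DecidableEq A] (h : X → A) (g : X → ℝ) :
    ∑ y : X, ((fc h y : ℝ))⁻¹ * (∑ a ∈ Finset.univ.filter (fun a => h a = h y), g a)
      = ∑ y : X, g y := by
  have e1 : ∀ y : X, ((fc h y : ℝ))⁻¹ * (∑ a ∈ Finset.univ.filter (fun a => h a = h y), g a)
      = ∑ a : X, if h a = h y then ((fc h y : ℝ))⁻¹ * g a else 0 := by
    intro y
    rw [Finset.mul_sum, Finset.sum_filter]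
  rw [Finset.sum_congr rfl (fun y _ => e1 y), Finset.sum_comm]
  congr 1; funext a
  have : ∀ y : X, (if h a = h y then ((fc h y : ℝ))⁻¹ * g a else 0)
      = (if h y = h a then ((fc h y : ℝ))⁻¹ else 0) * g a := by
    intro y
    by_cases hy : h a = h y
    · rw [if_pos hy, if_pos hy.symm]
    · rw [if_neg hy, if_neg (fun e => hy e.symm), zero_mul]
  rw [Finset.sum_congr rfl (fun y _ => this y), ← Finset.sum_mul, ← Finset.sum_filter,
    sum_fiber_inv h a, one_mul]

lemma sum_inv_fc_le {A : Type*} [Fintype A] [DecidableEq A] (h : X → A) :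
    ∑ y : X, ((fc h y : ℝ))⁻¹ ≤ (Fintype.card A : ℝ) := by
  rw [← Finset.sum_fiberwise Finset.univ h (fun y => ((fc h y : ℝ))⁻¹)]
  calc ∑ b : A, ∑ y ∈ Finset.univ.filter (fun y => h y = b), ((fc h y : ℝ))⁻¹
      ≤ ∑ _b : A, (1 : ℝ) := by
        apply Finset.sum_le_sum
        intro b _
        by_cases hb : (Finset.univ.filter fun y => h y = b).Nonempty
        · have hcard : ((Finset.univ.filter fun y => h y = b).card : ℝ) ≠ 0 := by
            exact_mod_cast (Finset.card_pos.mpr hb).ne'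
          have h1 : ∀ y ∈ Finset.univ.filter (fun y => h y = b),
              ((fc h y : ℝ))⁻¹ = (((Finset.univ.filter fun y => h y = b).card : ℝ))⁻¹ := by
            intro y hy
            rw [Finset.mem_filter] at hy
            have : fc h y = (Finset.univ.filter fun y => h y = b).card := by
              unfold fc
              congr 1
              apply Finset.filter_congr
              intro z _
              simp [hy.2]
            rw [this]
          rw [Finset.sum_congr rfl h1, Finset.sum_const, nsmul_eq_mul,
            mul_inv_cancel₀ hcard]
        · rw [Finset.not_nonempty_iff_eq_empty.mp hb, Finset.sum_empty]
          norm_num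
    _ = (Fintype.card A : ℝ) := by
        rw [Finset.sum_const, Finset.card_univ, nsmul_eq_mul, mul_one]

lemma marginal (n : ℕ) :
    ∀ (A : Fin n → Type v) [∀ i, DecidableEq (A i)]
      (f : (i : Fin n) → X → A i) (p : Fin (n + 1)) (g : X → ℝ),
    (∑ x : Fin (n + 1) → X,
      (∏ i : Fin n, if f i (x i.castSucc) = f i (x i.succ)
          then ((fc (f i) (x i.castSucc) : ℝ))⁻¹ else 0) * g (x p))
      = ∑ y : X, g y := by
  induction n with
  | zero =>
    intro A dA f p g
    have hp : p = 0 := by ext; omega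
    subst hp
    rw [show (∑ x : Fin 1 → X,
        (∏ i : Fin 0, if f i (x i.castSucc) = f i (x i.succ)
          then ((fc (f i) (x i.castSucc) : ℝ))⁻¹ else 0) * g (x 0))
      = ∑ x : Fin 1 → X, g (x 0) by
        apply Finset.sum_congr rfl; intro x _; simp]
    exact Fintype.sum_equiv (Equiv.funUnique (Fin 1) X) _ _ (fun x => rfl)
  | succ n ih =>
    intro A dA f p g
    have hsum : ∀ F : (Fin (n + 2) → X) → ℝ,
        (∑ x : Fin (n + 2) → X, F x) = ∑ v : Fin (n + 1) → X, ∑ a : X, F (Fin.cons a v) := by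
      intro F
      rw [← Equiv.sum_comp (Fin.consEquiv (fun _ : Fin (n + 2) => X)) F, Fintype.sum_prod_type]
      exact Finset.sum_comm
    rw [hsum]
    have hprod : ∀ (a : X) (v : Fin (n + 1) → X),
        (∏ i : Fin (n + 1), if f i ((Fin.cons (α := fun _ => X) a v) i.castSucc) = f i ((Fin.cons (α := fun _ => X) a v) i.succ)
            then ((fc (f i) ((Fin.cons (α := fun _ => X) a v) i.castSucc) : ℝ))⁻¹ else 0)
        = (if f 0 a = f 0 (v 0) then ((fc (f 0) a : ℝ))⁻¹ else 0) *
          ∏ j : Fin n, (if f j.succ (v j.castSucc) = f j.succ (v j.succ)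
            then ((fc (f j.succ) (v j.castSucc) : ℝ))⁻¹ else 0) := by
      intro a v
      rw [Fin.prod_univ_succ]
      simp [← Fin.succ_castSucc]
    induction p using Fin.cases with
    | zero =>
      have step1 : ∀ v : Fin (n + 1) → X,
          (∑ a : X,
            (∏ i : Fin (n + 1), if f i ((Fin.cons (α := fun _ => X) a v) i.castSucc) = f i ((Fin.cons (α := fun _ => X) a v) i.succ)
              then ((fc (f i) ((Fin.cons (α := fun _ => X) a v) i.castSucc) : ℝ))⁻¹ else 0) * g ((Fin.cons (α := fun _ => X) a v) 0))
          = (∏ j : Fin n, (if f j.succ (v j.castSucc) = f j.succ (v j.succ)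
              then ((fc (f j.succ) (v j.castSucc) : ℝ))⁻¹ else 0)) *
            (((fc (f 0) (v 0) : ℝ))⁻¹ *
              ∑ b ∈ Finset.univ.filter (fun b => f 0 b = f 0 (v 0)), g b) := by
        intro v
        have e2 : ∀ a : X,
            (∏ i : Fin (n + 1), if f i ((Fin.cons (α := fun _ => X) a v) i.castSucc) = f i ((Fin.cons (α := fun _ => X) a v) i.succ)
              then ((fc (f i) ((Fin.cons (α := fun _ => X) a v) i.castSucc) : ℝ))⁻¹ else 0) * g ((Fin.cons (α := fun _ => X) a v) 0)
            = (∏ j : Fin n, (if f j.succ (v j.castSucc) = f j.succ (v j.succ)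
                then ((fc (f j.succ) (v j.castSucc) : ℝ))⁻¹ else 0)) *
              ((if f 0 a = f 0 (v 0) then ((fc (f 0) a : ℝ))⁻¹ else 0) * g a) := by
          intro a
          rw [hprod a v, Fin.cons_zero (α := fun _ => X)]
          ring
        rw [Finset.sum_congr rfl (fun a _ => e2 a), ← Finset.mul_sum]
        congr 1
        have e3 : ∀ a : X, (if f 0 a = f 0 (v 0) then ((fc (f 0) a : ℝ))⁻¹ else 0) * g a
            = (if f 0 a = f 0 (v 0) then ((fc (f 0) (v 0) : ℝ))⁻¹ * g a else 0) := by
          intro a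
          by_cases h : f 0 a = f 0 (v 0)
          · rw [if_pos h, if_pos h, fc_congr (f 0) h]
          · rw [if_neg h, if_neg h, zero_mul]
        rw [Finset.sum_congr rfl (fun a _ => e3 a), ← Finset.sum_filter, ← Finset.mul_sum]
      rw [Finset.sum_congr rfl (fun v _ => step1 v)]
      rw [ih (fun j => A j.succ) (fun j => f j.succ) 0
        (fun y => ((fc (f 0) y : ℝ))⁻¹ * ∑ b ∈ Finset.univ.filter (fun b => f 0 b = f 0 y), g b)]
      exact sum_transfer (f 0) g
    | succ q =>
      have step1 : ∀ v : Fin (n + 1) → X,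
          (∑ a : X,
            (∏ i : Fin (n + 1), if f i ((Fin.cons (α := fun _ => X) a v) i.castSucc) = f i ((Fin.cons (α := fun _ => X) a v) i.succ)
              then ((fc (f i) ((Fin.cons (α := fun _ => X) a v) i.castSucc) : ℝ))⁻¹ else 0) * g ((Fin.cons (α := fun _ => X) a v) q.succ))
          = (∏ j : Fin n, (if f j.succ (v j.castSucc) = f j.succ (v j.succ)
              then ((fc (f j.succ) (v j.castSucc) : ℝ))⁻¹ else 0)) * g (v q) := by
        intro v
        have e2 : ∀ a : X,
            (∏ i : Fin (n + 1), if f i ((Fin.cons (α := fun _ => X) a v) i.castSucc) = f i ((Fin.cons (α := fun _ => X) a v) i.succ)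
              then ((fc (f i) ((Fin.cons (α := fun _ => X) a v) i.castSucc) : ℝ))⁻¹ else 0) * g ((Fin.cons (α := fun _ => X) a v) q.succ)
            = ((∏ j : Fin n, (if f j.succ (v j.castSucc) = f j.succ (v j.succ)
                then ((fc (f j.succ) (v j.castSucc) : ℝ))⁻¹ else 0)) * g (v q)) *
              (if f 0 a = f 0 (v 0) then ((fc (f 0) a : ℝ))⁻¹ else 0) := by
          intro a
          rw [hprod a v, Fin.cons_succ (α := fun _ => X)]
          ring
        rw [Finset.sum_congr rfl (fun a _ => e2 a), ← Finset.mul_sum]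
        have e4 : (∑ a : X, if f 0 a = f 0 (v 0) then ((fc (f 0) a : ℝ))⁻¹ else 0) = 1 := by
          rw [← Finset.sum_filter]
          exact sum_fiber_inv (f 0) (v 0)
        rw [e4, mul_one]
      rw [Finset.sum_congr rfl (fun v _ => step1 v)]
      exact ih (fun j => A j.succ) (fun j => f j.succ) q g

/-- AM–GM consequence: for positive reals `z i`, `n + 1 ≤ 2 ^ n * ∏ z + ∑ (z i)⁻¹`. -/
lemma amgm (n : ℕ) (z : Fin n → ℝ) (hz : ∀ i, 0 < z i) :
    ((n : ℝ) + 1) ≤ 2 ^ n * ∏ i, z i + ∑ i, (z i)⁻¹ := by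
  set t : Fin (n + 1) → ℝ := Fin.cons (2 ^ n * ∏ i, z i) (fun i => (z i)⁻¹) with ht
  have htnn : ∀ i, 0 ≤ t i := by
    intro i
    induction i using Fin.cases with
    | zero => rw [ht, Fin.cons_zero]
              exact mul_nonneg (by positivity) (Finset.prod_nonneg fun i _ => (hz i).le)
    | succ j => rw [ht, Fin.cons_succ]
                exact (inv_pos.mpr (hz j)).le
  have hprod : ∏ i, t i = 2 ^ n := by
    rw [ht, Fin.prod_cons]
    rw [mul_assoc, ← Finset.prod_mul_distrib]
    have : ∀ i ∈ Finset.univ, z i * (z i)⁻¹ = 1 := fun i _ => mul_inv_cancel₀ (hz i).ne'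
    rw [Finset.prod_congr rfl this, Finset.prod_const_one, mul_one]
  have hnp : (0 : ℝ) < (n : ℝ) + 1 := by positivity
  have key := Real.geom_mean_le_arith_mean_weighted Finset.univ
    (fun _ : Fin (n + 1) => ((n : ℝ) + 1)⁻¹) t
    (fun i _ => by positivity) (by
      rw [Finset.sum_const, Finset.card_univ, Fintype.card_fin, nsmul_eq_mul]
      push_cast
      exact mul_inv_cancel₀ hnp.ne')
    (fun i _ => htnn i)
  have hlhs : (1 : ℝ) ≤ ∏ i, t i ^ (((n : ℝ) + 1)⁻¹) := by
    rw [Real.finset_prod_rpow Finset.univ t (fun i _ => htnn i), hprod]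
    apply Real.one_le_rpow
    · exact one_le_pow₀ (by norm_num)
    · positivity
  have hsum : (1 : ℝ) ≤ ((n : ℝ) + 1)⁻¹ * ∑ i, t i := by
    rw [Finset.mul_sum]
    exact hlhs.trans key
  have h2 : ((n : ℝ) + 1) ≤ ∑ i, t i := by
    have h3 := mul_le_mul_of_nonneg_left hsum hnp.le
    rwa [mul_one, ← mul_assoc, mul_inv_cancel₀ hnp.ne', one_mul] at h3
  calc ((n : ℝ) + 1) ≤ ∑ i, t i := h2
    _ = 2 ^ n * ∏ i, z i + ∑ i, (z i)⁻¹ := by rw [ht, Fin.sum_cons]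

end KTaux

/-- **Katz–Tao, inequality (7) in the proof of the combinatorial lemma.**  Let `X` and
`A₁, …, Aₙ` be finite sets (`n ≥ 0`), and for each `i` let `fᵢ : X → Aᵢ` be a function.
Then the number of tuples `(x₀, …, xₙ) ∈ X^(n+1)` with `fᵢ(x_{i-1}) = fᵢ(xᵢ)` for all
`i` is at least `2^(-n) (#X)^(n+1) / ∏ᵢ #Aᵢ`, i.e.
`2^n · (count) · ∏ᵢ #Aᵢ ≥ (#X)^(n+1)`. -/
theorem chain_count_lower_bound_weak (n : ℕ) (X : Type*) [Fintype X] [DecidableEq X]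
    (A : Fin n → Type*) [∀ i, Fintype (A i)] [∀ i, DecidableEq (A i)]
    (f : (i : Fin n) → X → A i) :
    Fintype.card X ^ (n + 1) ≤
      2 ^ n *
      (Fintype.card {x : Fin (n + 1) → X //
        ∀ i : Fin n, f i (x i.castSucc) = f i (x i.succ)} *
      ∏ i : Fin n, Fintype.card (A i)) := by
  rcases Nat.eq_zero_or_pos (Fintype.card X) with hX0 | hX0
  · rw [hX0, zero_pow (Nat.succ_ne_zero n)]
    exact Nat.zero_le _
  have hXne : Nonempty X := Fintype.card_pos_iff.mp hX0
  have hA : ∀ i, 0 < (Fintype.card (A i) : ℝ) := fun i => by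
    have : Nonempty (A i) := ⟨f i (Classical.arbitrary X)⟩
    exact_mod_cast Fintype.card_pos
  have hL : (0 : ℝ) < (Fintype.card X : ℝ) := by exact_mod_cast hX0
  set W : (Fin (n + 1) → X) → ℝ := fun x =>
    ∏ i : Fin n, if f i (x i.castSucc) = f i (x i.succ)
      then ((KTaux.fc (f i) (x i.castSucc) : ℝ))⁻¹ else 0 with hWdef
  have hM : ∀ (p : Fin (n + 1)) (g : X → ℝ),
      (∑ x : Fin (n + 1) → X,
        (∏ i : Fin n, if f i (x i.castSucc) = f i (x i.succ)
          then ((KTaux.fc (f i) (x i.castSucc) : ℝ))⁻¹ else 0) * g (x p))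
        = ∑ y : X, g y := by
    intro p g
    exact KTaux.marginal (X := X) n A f p g
  -- total mass of W is #X
  have hS1 : ∑ x : Fin (n + 1) → X, W x = (Fintype.card X : ℝ) := by
    have h := hM 0 (fun _ => (1 : ℝ))
    simp only [hWdef]
    have e : ∀ x : Fin (n + 1) → X,
        (∏ i : Fin n, if f i (x i.castSucc) = f i (x i.succ)
          then ((KTaux.fc (f i) (x i.castSucc) : ℝ))⁻¹ else 0)
        = (∏ i : Fin n, if f i (x i.castSucc) = f i (x i.succ)
          then ((KTaux.fc (f i) (x i.castSucc) : ℝ))⁻¹ else 0) * 1 :=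
      fun x => (mul_one _).symm
    rw [Finset.sum_congr rfl (fun x _ => e x)]
    rw [show (∑ x : Fin (n + 1) → X,
        (∏ i : Fin n, if f i (x i.castSucc) = f i (x i.succ)
          then ((KTaux.fc (f i) (x i.castSucc) : ℝ))⁻¹ else 0) * 1) = ∑ _y : X, (1:ℝ) from h]
    simp
  -- the i-th marginal statistic
  have hS2 : ∀ i : Fin n,
      (∑ x : Fin (n + 1) → X, W x * ((KTaux.fc (f i) (x i.castSucc) : ℝ))⁻¹)
        ≤ (Fintype.card (A i) : ℝ) := by
    intro i
    have h := hM i.castSucc (fun y => ((KTaux.fc (f i) y : ℝ))⁻¹)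
    simp only [hWdef]
    exact le_trans (le_of_eq h) (KTaux.sum_inv_fc_le (f i))
  -- pointwise bound coming from AM-GM
  have hpt : ∀ x : Fin (n + 1) → X,
      W x * (((n : ℝ) + 1) - ∑ i : Fin n,
          (Fintype.card X : ℝ) * (((Fintype.card (A i) : ℝ))⁻¹ *
            ((KTaux.fc (f i) (x i.castSucc) : ℝ))⁻¹))
        ≤ (2 ^ n * (∏ i : Fin n, (Fintype.card (A i) : ℝ)) / (Fintype.card X : ℝ) ^ n) *
          (if (∀ i : Fin n, f i (x i.castSucc) = f i (x i.succ)) then (1 : ℝ) else 0) := by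
    intro x
    by_cases hx : ∀ i : Fin n, f i (x i.castSucc) = f i (x i.succ)
    · rw [if_pos hx, mul_one]
      have hW : W x = ∏ i : Fin n, ((KTaux.fc (f i) (x i.castSucc) : ℝ))⁻¹ :=
        Finset.prod_congr rfl fun i _ => if_pos (hx i)
      set z : Fin n → ℝ := fun i =>
        (KTaux.fc (f i) (x i.castSucc) : ℝ) * (Fintype.card (A i) : ℝ) / (Fintype.card X : ℝ)
        with hzdef
      have hfc : ∀ i, (0 : ℝ) < (KTaux.fc (f i) (x i.castSucc) : ℝ) := fun i => by
        exact_mod_cast KTaux.fc_pos (f i) (x i.castSucc)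
      have hz : ∀ i, 0 < z i := fun i => by
        rw [hzdef]
        exact div_pos (mul_pos (hfc i) (hA i)) hL
      have hinv : ∀ i, (Fintype.card X : ℝ) * (((Fintype.card (A i) : ℝ))⁻¹ *
          ((KTaux.fc (f i) (x i.castSucc) : ℝ))⁻¹) = (z i)⁻¹ := by
        intro i
        rw [hzdef]
        field_simp
      have hkey := KTaux.amgm n z hz
      have h2 : ((n : ℝ) + 1) - ∑ i, (z i)⁻¹ ≤ 2 ^ n * ∏ i, z i := by linarith
      have hWnn : 0 ≤ ∏ i : Fin n, ((KTaux.fc (f i) (x i.castSucc) : ℝ))⁻¹ :=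
        Finset.prod_nonneg fun i _ => (inv_pos.mpr (hfc i)).le
      calc W x * (((n : ℝ) + 1) - ∑ i : Fin n,
              (Fintype.card X : ℝ) * (((Fintype.card (A i) : ℝ))⁻¹ *
                ((KTaux.fc (f i) (x i.castSucc) : ℝ))⁻¹))
          = (∏ i : Fin n, ((KTaux.fc (f i) (x i.castSucc) : ℝ))⁻¹) *
              (((n : ℝ) + 1) - ∑ i, (z i)⁻¹) := by
            rw [hW]
            congr 2
            exact Finset.sum_congr rfl fun i _ => hinv i
        _ ≤ (∏ i : Fin n, ((KTaux.fc (f i) (x i.castSucc) : ℝ))⁻¹) * (2 ^ n * ∏ i, z i) :=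
            mul_le_mul_of_nonneg_left h2 hWnn
        _ = 2 ^ n * (∏ i : Fin n, (Fintype.card (A i) : ℝ)) / (Fintype.card X : ℝ) ^ n := by
            have e : ∀ i ∈ Finset.univ, ((KTaux.fc (f i) (x i.castSucc) : ℝ))⁻¹ * z i
                = (Fintype.card (A i) : ℝ) / (Fintype.card X : ℝ) := by
              intro i _
              have hzi : z i = (KTaux.fc (f i) (x i.castSucc) : ℝ) *
                  ((Fintype.card (A i) : ℝ) / (Fintype.card X : ℝ)) := by
                rw [hzdef]; ring
              rw [hzi, ← mul_assoc, inv_mul_cancel₀ (hfc i).ne', one_mul]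
            rw [mul_left_comm, ← Finset.prod_mul_distrib, Finset.prod_congr rfl e,
              Finset.prod_div_distrib, Finset.prod_const, Finset.card_univ, Fintype.card_fin,
              mul_div_assoc]
    · rw [if_neg hx, mul_zero]
      push_neg at hx
      obtain ⟨i, hi⟩ := hx
      have hW : W x = 0 := Finset.prod_eq_zero (Finset.mem_univ i) (by rw [if_neg hi])
      rw [hW, zero_mul]
  -- summing the pointwise bound
  have hsum1 : (Fintype.card X : ℝ) ≤ ∑ x : Fin (n + 1) → X,
      W x * (((n : ℝ) + 1) - ∑ i : Fin n,
        (Fintype.card X : ℝ) * (((Fintype.card (A i) : ℝ))⁻¹ *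
          ((KTaux.fc (f i) (x i.castSucc) : ℝ))⁻¹)) := by
    have expand : (∑ x : Fin (n + 1) → X,
        W x * (((n : ℝ) + 1) - ∑ i : Fin n,
          (Fintype.card X : ℝ) * (((Fintype.card (A i) : ℝ))⁻¹ *
            ((KTaux.fc (f i) (x i.castSucc) : ℝ))⁻¹)))
        = ((n : ℝ) + 1) * (∑ x : Fin (n + 1) → X, W x)
          - ∑ i : Fin n, (Fintype.card X : ℝ) * (((Fintype.card (A i) : ℝ))⁻¹ *
              (∑ x : Fin (n + 1) → X, W x * ((KTaux.fc (f i) (x i.castSucc) : ℝ))⁻¹)) := by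
      rw [Finset.sum_congr rfl (fun x _ => mul_sub (W x) _ _), Finset.sum_sub_distrib]
      congr 1
      · rw [← Finset.sum_mul, mul_comm]
      · calc ∑ x : Fin (n + 1) → X, W x * (∑ i : Fin n,
              (Fintype.card X : ℝ) * (((Fintype.card (A i) : ℝ))⁻¹ *
                ((KTaux.fc (f i) (x i.castSucc) : ℝ))⁻¹))
            = ∑ x : Fin (n + 1) → X, ∑ i : Fin n,
              (Fintype.card X : ℝ) * (((Fintype.card (A i) : ℝ))⁻¹ *
                (W x * ((KTaux.fc (f i) (x i.castSucc) : ℝ))⁻¹)) := by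
              apply Finset.sum_congr rfl
              intro x _
              rw [Finset.mul_sum]
              exact Finset.sum_congr rfl fun i _ => by ring
          _ = ∑ i : Fin n, ∑ x : Fin (n + 1) → X,
              (Fintype.card X : ℝ) * (((Fintype.card (A i) : ℝ))⁻¹ *
                (W x * ((KTaux.fc (f i) (x i.castSucc) : ℝ))⁻¹)) := Finset.sum_comm
          _ = ∑ i : Fin n, (Fintype.card X : ℝ) * (((Fintype.card (A i) : ℝ))⁻¹ *
                (∑ x : Fin (n + 1) → X, W x * ((KTaux.fc (f i) (x i.castSucc) : ℝ))⁻¹)) := by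
              apply Finset.sum_congr rfl
              intro i _
              rw [← Finset.mul_sum, ← Finset.mul_sum]
    rw [expand, hS1]
    have bound : ∑ i : Fin n, (Fintype.card X : ℝ) * (((Fintype.card (A i) : ℝ))⁻¹ *
        (∑ x : Fin (n + 1) → X, W x * ((KTaux.fc (f i) (x i.castSucc) : ℝ))⁻¹))
        ≤ ∑ _i : Fin n, (Fintype.card X : ℝ) := by
      apply Finset.sum_le_sum
      intro i _
      have h1 := hS2 i
      have h2 : ((Fintype.card (A i) : ℝ))⁻¹ *
          (∑ x : Fin (n + 1) → X, W x * ((KTaux.fc (f i) (x i.castSucc) : ℝ))⁻¹)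
          ≤ ((Fintype.card (A i) : ℝ))⁻¹ * (Fintype.card (A i) : ℝ) :=
        mul_le_mul_of_nonneg_left h1 (inv_pos.mpr (hA i)).le
      rw [inv_mul_cancel₀ (hA i).ne'] at h2
      calc (Fintype.card X : ℝ) * (((Fintype.card (A i) : ℝ))⁻¹ *
            (∑ x : Fin (n + 1) → X, W x * ((KTaux.fc (f i) (x i.castSucc) : ℝ))⁻¹))
          ≤ (Fintype.card X : ℝ) * 1 := mul_le_mul_of_nonneg_left h2 hL.le
        _ = (Fintype.card X : ℝ) := mul_one _
    have hnsum : ∑ _i : Fin n, (Fintype.card X : ℝ) = (n : ℝ) * (Fintype.card X : ℝ) := by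
      rw [Finset.sum_const, Finset.card_univ, Fintype.card_fin, nsmul_eq_mul]
    rw [hnsum] at bound
    nlinarith [bound, hL]
  have hsum2 : (∑ x : Fin (n + 1) → X,
      W x * (((n : ℝ) + 1) - ∑ i : Fin n,
        (Fintype.card X : ℝ) * (((Fintype.card (A i) : ℝ))⁻¹ *
          ((KTaux.fc (f i) (x i.castSucc) : ℝ))⁻¹)))
      ≤ (2 ^ n * (∏ i : Fin n, (Fintype.card (A i) : ℝ)) / (Fintype.card X : ℝ) ^ n) *
        (∑ x : Fin (n + 1) → X,
          (if (∀ i : Fin n, f i (x i.castSucc) = f i (x i.succ)) then (1 : ℝ) else 0)) := by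
    rw [Finset.mul_sum]
    exact Finset.sum_le_sum fun x _ => hpt x
  have hNcard : (∑ x : Fin (n + 1) → X,
      (if (∀ i : Fin n, f i (x i.castSucc) = f i (x i.succ)) then (1 : ℝ) else 0))
      = (Fintype.card {x : Fin (n + 1) → X //
          ∀ i : Fin n, f i (x i.castSucc) = f i (x i.succ)} : ℝ) := by
    rw [Finset.sum_boole]
    congr 1
    exact (Fintype.card_of_subtype _ (fun x => by simp)).symm
  have final : (Fintype.card X : ℝ)
      ≤ (2 ^ n * (∏ i : Fin n, (Fintype.card (A i) : ℝ)) / (Fintype.card X : ℝ) ^ n) *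
        (Fintype.card {x : Fin (n + 1) → X //
          ∀ i : Fin n, f i (x i.castSucc) = f i (x i.succ)} : ℝ) := by
    rw [← hNcard]
    exact hsum1.trans hsum2
  have hLn : (0 : ℝ) < (Fintype.card X : ℝ) ^ n := pow_pos hL n
  rw [div_mul_eq_mul_div, le_div_iff₀ hLn] at final
  have hfinal2 : ((Fintype.card X : ℝ)) ^ (n + 1)
      ≤ 2 ^ n * ((Fintype.card {x : Fin (n + 1) → X //
          ∀ i : Fin n, f i (x i.castSucc) = f i (x i.succ)} : ℝ) *
        ∏ i : Fin n, (Fintype.card (A i) : ℝ)) := by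
    calc ((Fintype.card X : ℝ)) ^ (n + 1) = (Fintype.card X : ℝ) * (Fintype.card X : ℝ) ^ n := by
          ring
      _ ≤ 2 ^ n * (∏ i : Fin n, (Fintype.card (A i) : ℝ)) *
          (Fintype.card {x : Fin (n + 1) → X //
            ∀ i : Fin n, f i (x i.castSucc) = f i (x i.succ)} : ℝ) := final
      _ = 2 ^ n * ((Fintype.card {x : Fin (n + 1) → X //
            ∀ i : Fin n, f i (x i.castSucc) = f i (x i.succ)} : ℝ) *
          ∏ i : Fin n, (Fintype.card (A i) : ℝ)) := by ring
  exact_mod_cast hfinal2
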